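/- Let G be a k-tree with n vertices, n ≥ k(k+1), and let S be a uniformly random ⌊n/(k+1)⌋-element subset of vertices. Then the expected number of connected components of G[S] is at least k^k/(k+1)^(k+1) · n − (k+2)/e. -/

import Mathlib

set_option maxHeartbeats 2000000


open Finset

/-- `G` together with the data `M` is a `k`-tree with the vertex ordering of `Fin n`. -/
def IsKTree (n k : ℕ) (G : SimpleGraph (Fin n)) (M : Fin n → Finset (Fin n)) : Prop :=
  (∀ v : Fin n, ∀ w ∈ M v, w < v) ∧
  (∀ v : Fin n, k ≤ (v : ℕ) → (M v).card = k) ∧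
  (∀ v : Fin n, (v : ℕ) < k → M v = Finset.univ.filter (· < v)) ∧
  (∀ v w : Fin n, G.Adj v w ↔ (w ∈ M v ∨ v ∈ M w)) ∧
  (∀ v : Fin n, ∀ w₁ ∈ M v, ∀ w₂ ∈ M v, w₁ ≠ w₂ → G.Adj w₁ w₂)

section AuxKTree

open Finset SimpleGraph

variable {n k : ℕ} {G : SimpleGraph (Fin n)} {M : Fin n → Finset (Fin n)}

lemma key_walk (hlt : ∀ v : Fin n, ∀ w ∈ M v, w < v)
    (hadj : ∀ v w : Fin n, G.Adj v w ↔ (w ∈ M v ∨ v ∈ M w))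
    (hcl : ∀ v : Fin n, ∀ w₁ ∈ M v, ∀ w₂ ∈ M v, w₁ ≠ w₂ → G.Adj w₁ w₂)
    (S : Finset (Fin n)) :
    ∀ N : ℕ, ∀ a b : (S : Set (Fin n)),
      ∀ p : (G.induce (S : Set (Fin n))).Walk a b, p.length ≤ N → (a : Fin n) < b →
      (M (b : Fin n) ∩ S).Nonempty := by
  have adj_induce : ∀ a b : (S : Set (Fin n)),
      (G.induce (S : Set (Fin n))).Adj a b ↔ G.Adj a b := fun a b => Iff.rfl
  have mem_of_adj : ∀ a b : (S : Set (Fin n)),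
      (G.induce (S : Set (Fin n))).Adj a b → (b : Fin n) < a → (b : Fin n) ∈ M (a : Fin n) := by
    intro a b hab hba
    rcases (hadj a b).1 ((adj_induce a b).1 hab) with h | h
    · exact h
    · exact absurd (hlt _ _ h) (by omega)
  intro N
  induction N with
  | zero =>
    intro a b p hlen hab
    have : (a : Fin n) = b := congrArg _ (Walk.eq_of_length_eq_zero (Nat.le_zero.mp hlen))
    omega
  | succ N ih =>
    intro a b p hlen hab
    have hne : a ≠ b := fun h => by rw [h] at hab; omega
    obtain ⟨m, hmF, hmax⟩ := Finset.exists_max_image p.support.toFinset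
      (fun x => (x : Fin n)) ⟨b, List.mem_toFinset.2 p.end_mem_support⟩
    have hm : m ∈ p.support := List.mem_toFinset.1 hmF
    have hmax' : ∀ x ∈ p.support, (x : Fin n) ≤ m := fun x hx =>
      hmax x (List.mem_toFinset.2 hx)
    by_cases hmb : m = b
    · -- last edge gives an element of M b ∩ S
      obtain ⟨c, hbc, q, hq⟩ := (Walk.not_nil_iff).1
        (Walk.not_nil_of_ne (Ne.symm hne) : ¬ p.reverse.Nil)
      have hcsupp : c ∈ p.support := by
        have : c ∈ p.reverse.support := by rw [hq]; simp [Walk.support_cons]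
        rwa [Walk.support_reverse, List.mem_reverse] at this
      have hclt : (c : Fin n) < b := by
        have h1 : (c : Fin n) ≤ m := hmax' c hcsupp
        have h2 : (b : Fin n) ≠ c := ((adj_induce b c).1 hbc).ne
        rw [hmb] at h1
        omega
      exact ⟨c, Finset.mem_inter.2 ⟨mem_of_adj b c hbc hclt, c.2⟩⟩
    · -- m is not b (nor a); shortcut around m
      have hma : m ≠ a := by
        intro h
        have := hmax' b p.end_mem_support
        rw [h] at this; omega
      have hmgt : (a : Fin n) < m ∧ (b : Fin n) ≤ m :=
        ⟨lt_of_lt_of_le hab (hmax' b p.end_mem_support), hmax' b p.end_mem_support⟩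
      set p₁ := p.takeUntil m hm with hp₁
      set p₂ := p.dropUntil m hm with hp₂
      have hspec : p₁.append p₂ = p := p.take_spec hm
      have hlen12 : p₁.length + p₂.length = p.length := by
        rw [← Walk.length_append, hspec]
      -- last edge of p₁ : a ⟶ m
      obtain ⟨x, hmx, q₁, hq₁⟩ := (Walk.not_nil_iff).1
        (Walk.not_nil_of_ne hma : ¬ p₁.reverse.Nil)
      -- first edge of p₂ : m ⟶ b
      obtain ⟨y, hmy, q₂, hq₂⟩ := (Walk.not_nil_iff).1
        (Walk.not_nil_of_ne hmb : ¬ p₂.Nil)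
      have hq₁len : q₁.length + 1 = p₁.length := by
        have := congrArg Walk.length hq₁
        simpa [Walk.length_reverse] using this.symm
      have hq₂len : q₂.length + 1 = p₂.length := by
        have := congrArg Walk.length hq₂
        simpa using this.symm
      have hxsupp : x ∈ p.support := by
        have hx1 : x ∈ p₁.reverse.support := by rw [hq₁]; simp [Walk.support_cons]
        rw [Walk.support_reverse, List.mem_reverse] at hx1
        exact p.support_takeUntil_subset hm hx1
      have hysupp : y ∈ p.support := by
        have hy1 : y ∈ p₂.support := by rw [hq₂]; simp [Walk.support_cons]
        exact p.support_dropUntil_subset hm hy1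
      have hxlt : (x : Fin n) < m := by
        have := hmax' x hxsupp
        have h2 : (m : Fin n) ≠ x := Subtype.coe_injective.ne hmx.ne
        omega
      have hylt : (y : Fin n) < m := by
        have := hmax' y hysupp
        have h2 : (m : Fin n) ≠ y := Subtype.coe_injective.ne hmy.ne
        omega
      have hxM : (x : Fin n) ∈ M (m : Fin n) := mem_of_adj m x hmx hxlt
      have hyM : (y : Fin n) ∈ M (m : Fin n) := mem_of_adj m y hmy hylt
      -- q₁.reverse : a ⟶ x,  q₂ : y ⟶ b
      by_cases hxy : x = y
      · subst hxy
        have hplen : q₁.reverse.length + q₂.length ≤ N := by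
          rw [Walk.length_reverse]; omega
        exact ih a b (q₁.reverse.append q₂) (by rw [Walk.length_append]; exact hplen) hab
      · have hadjxy : (G.induce (S : Set (Fin n))).Adj x y :=
          (adj_induce x y).2 (hcl _ _ hxM _ hyM (Subtype.coe_injective.ne hxy))
        refine ih a b (q₁.reverse.append (Walk.cons hadjxy q₂)) ?_ hab
        rw [Walk.length_append, Walk.length_reverse, Walk.length_cons]
        omega

lemma comp_bound (hlt : ∀ v : Fin n, ∀ w ∈ M v, w < v)
    (hadj : ∀ v w : Fin n, G.Adj v w ↔ (w ∈ M v ∨ v ∈ M w))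
    (hcl : ∀ v : Fin n, ∀ w₁ ∈ M v, ∀ w₂ ∈ M v, w₁ ≠ w₂ → G.Adj w₁ w₂)
    (S : Finset (Fin n)) :
    (S.filter (fun v => M v ∩ S = ∅)).card
      ≤ Nat.card ((G.induce (S : Set (Fin n))).ConnectedComponent) := by
  classical
  set A := S.filter (fun v => M v ∩ S = ∅) with hA
  have hmem : ∀ v : Fin n, v ∈ A → (v : Fin n) ∈ (S : Set (Fin n)) := by
    intro v hv; exact Finset.mem_coe.2 (Finset.mem_filter.1 hv).1
  let f : ↥(A : Finset (Fin n)) → (G.induce (S : Set (Fin n))).ConnectedComponent :=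
    fun v => SimpleGraph.connectedComponentMk _ ⟨v.1, hmem v.1 v.2⟩
  have hinj : Function.Injective f := by
    intro v u h
    have hreach := SimpleGraph.ConnectedComponent.exact h
    rcases lt_trichotomy (v.1 : Fin n) (u.1 : Fin n) with hvu | hvu | hvu
    · obtain ⟨p⟩ := hreach
      have := key_walk hlt hadj hcl S p.length _ _ p le_rfl hvu
      exact absurd (Finset.mem_filter.1 u.2).2 (by
        rcases this with ⟨c, hc⟩
        intro hemp
        simp [hemp] at hc)
    · exact Subtype.ext hvu
    · obtain ⟨p⟩ := hreach
      have := key_walk hlt hadj hcl S p.reverse.length _ _ p.reverse le_rfl hvu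
      exact absurd (Finset.mem_filter.1 v.2).2 (by
        rcases this with ⟨c, hc⟩
        intro hemp
        simp [hemp] at hc)
  calc A.card = Nat.card ↥(A : Finset (Fin n)) := (Nat.card_eq_finsetCard A).symm
    _ ≤ _ := Nat.card_le_card_of_injective f hinj

lemma count_v (s : ℕ) (hs : 1 ≤ s) (v : Fin n) (hv : v ∉ M v) (hcard : (M v).card = k) :
    (((Finset.univ : Finset (Fin n)).powersetCard s).filter
        (fun S => v ∈ S ∧ M v ∩ S = ∅)).card = (n - (k + 1)).choose (s - 1) := by
  classical
  have hcard2 : ((Finset.univ : Finset (Fin n)) \ insert v (M v)).card = n - (k + 1) := by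
    rw [Finset.card_sdiff_of_subset (Finset.subset_univ _), Finset.card_insert_of_notMem hv, hcard]
    simp
  rw [← hcard2, ← Finset.card_powersetCard]
  refine Finset.card_bij' (fun S _ => S.erase v) (fun T _ => insert v T) ?hi ?hj ?li ?ri
  case hi =>
    intro S hS
    rw [Finset.mem_filter, Finset.mem_powersetCard] at hS
    obtain ⟨⟨-, hScard⟩, hvS, hMS⟩ := hS
    rw [Finset.mem_powersetCard]
    constructor
    · intro x hx
      rw [Finset.mem_erase] at hx
      rw [Finset.mem_sdiff, Finset.mem_insert]
      refine ⟨Finset.mem_univ _, ?_⟩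
      rintro (rfl | hxM)
      · exact hx.1 rfl
      · exact Finset.notMem_empty x (hMS ▸ Finset.mem_inter.2 ⟨hxM, hx.2⟩)
    · rw [Finset.card_erase_of_mem hvS, hScard]
  case hj =>
    intro T hT
    rw [Finset.mem_powersetCard] at hT
    obtain ⟨hTsub, hTcard⟩ := hT
    have hvT : v ∉ T := fun h => by
      have := hTsub h
      rw [Finset.mem_sdiff, Finset.mem_insert] at this
      exact this.2 (Or.inl rfl)
    rw [Finset.mem_filter, Finset.mem_powersetCard]
    refine ⟨⟨Finset.subset_univ _, ?_⟩, Finset.mem_insert_self _ _, ?_⟩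
    · rw [Finset.card_insert_of_notMem hvT, hTcard]
      omega
    · rw [Finset.eq_empty_iff_forall_notMem]
      intro x hx
      rw [Finset.mem_inter, Finset.mem_insert] at hx
      rcases hx.2 with rfl | hxT
      · exact hv hx.1
      · have := hTsub hxT
        rw [Finset.mem_sdiff, Finset.mem_insert] at this
        exact this.2 (Or.inr hx.1)
  case li =>
    intro S hS
    rw [Finset.mem_filter] at hS
    exact Finset.insert_erase hS.2.1
  case ri =>
    intro T hT
    rw [Finset.mem_powersetCard] at hT
    have hvT : v ∉ T := fun h => by
      have := hT.1 h
      rw [Finset.mem_sdiff, Finset.mem_insert] at this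
      exact this.2 (Or.inl rfl)
    exact Finset.erase_insert hvT

lemma sum_lower (hlt : ∀ v : Fin n, ∀ w ∈ M v, w < v)
    (hMcard : ∀ v : Fin n, k ≤ (v : ℕ) → (M v).card = k)
    (s : ℕ) (hs : 1 ≤ s) (hkn : k < n) :
    (n - k) * (n - (k + 1)).choose (s - 1)
      ≤ ∑ S ∈ (Finset.univ : Finset (Fin n)).powersetCard s,
          (S.filter (fun v => M v ∩ S = ∅)).card := by
  classical
  have hswap : ∑ S ∈ (Finset.univ : Finset (Fin n)).powersetCard s,
      (S.filter (fun v => M v ∩ S = ∅)).card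
      = ∑ v : Fin n, (((Finset.univ : Finset (Fin n)).powersetCard s).filter
          (fun S => v ∈ S ∧ M v ∩ S = ∅)).card := by
    have h := Finset.sum_comm' (s := (Finset.univ : Finset (Fin n)).powersetCard s)
      (t := fun S => S.filter (fun v => M v ∩ S = ∅))
      (t' := (Finset.univ : Finset (Fin n)))
      (s' := fun v => ((Finset.univ : Finset (Fin n)).powersetCard s).filter
          (fun S => v ∈ S ∧ M v ∩ S = ∅))
      (f := fun _ _ => (1 : ℕ))
      (by
        intro S v
        simp only [Finset.mem_filter, Finset.mem_univ, true_and, and_true])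
    simp only [Finset.card_eq_sum_ones]
    exact h
  rw [hswap]
  have hsub : (Finset.univ.filter (fun v : Fin n => k ≤ (v : ℕ))) ⊆ Finset.univ :=
    Finset.filter_subset _ _
  calc (n - k) * (n - (k + 1)).choose (s - 1)
      = ∑ v ∈ Finset.univ.filter (fun v : Fin n => k ≤ (v : ℕ)),
          (n - (k + 1)).choose (s - 1) := by
        rw [Finset.sum_const, smul_eq_mul]
        congr 1
        have : Finset.univ.filter (fun v : Fin n => k ≤ (v : ℕ))
            = Finset.Ici (⟨k, hkn⟩ : Fin n) := by
          ext x
          simp [Fin.le_def]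
        rw [this, Fin.card_Ici]
    _ = ∑ v ∈ Finset.univ.filter (fun v : Fin n => k ≤ (v : ℕ)),
          (((Finset.univ : Finset (Fin n)).powersetCard s).filter
            (fun S => v ∈ S ∧ M v ∩ S = ∅)).card := by
        apply Finset.sum_congr rfl
        intro v hv
        rw [Finset.mem_filter] at hv
        exact (count_v s hs v (fun h => lt_irrefl v (hlt v v h)) (hMcard v hv.2)).symm
    _ ≤ _ := Finset.sum_le_sum_of_subset hsub

lemma mprc (m r : ℕ) : (m - r) * Nat.choose m r = m * Nat.choose (m - 1) r := by
  cases m with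
  | zero => simp
  | succ m =>
    rw [Nat.add_sub_cancel, mul_comm (m + 1 - r) _, ← Nat.choose_succ_right_eq,
      ← Nat.add_one_mul_choose_eq]

lemma nid (n t : ℕ) : ∀ K : ℕ,
    Nat.choose n (t + 1) * ((t + 1) * ∏ j ∈ Finset.range K, (n - (t + 1) - j))
      = (∏ j ∈ Finset.range (K + 1), (n - j)) * Nat.choose (n - 1 - K) t := by
  intro K
  induction K with
  | zero =>
    cases n with
    | zero => simp
    | succ n =>
      have h := Nat.add_one_mul_choose_eq n t
      simp only [Finset.range_zero, Finset.prod_empty, mul_one, zero_add,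
        Finset.prod_range_one, Nat.sub_zero, Nat.add_sub_cancel]
      omega
  | succ K ih =>
    calc Nat.choose n (t + 1) * ((t + 1) * ∏ j ∈ Finset.range (K + 1), (n - (t + 1) - j))
        = (Nat.choose n (t + 1) * ((t + 1) * ∏ j ∈ Finset.range K, (n - (t + 1) - j)))
            * (n - (t + 1) - K) := by
          rw [Finset.prod_range_succ]; ring
      _ = ((∏ j ∈ Finset.range (K + 1), (n - j)) * Nat.choose (n - 1 - K) t)
            * (n - (t + 1) - K) := by rw [ih]
      _ = (∏ j ∈ Finset.range (K + 1), (n - j))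
            * (((n - 1 - K) - t) * Nat.choose (n - 1 - K) t) := by
          have h : n - (t + 1) - K = n - 1 - K - t := by omega
          rw [h]; ring
      _ = (∏ j ∈ Finset.range (K + 1), (n - j))
            * ((n - 1 - K) * Nat.choose (n - 1 - K - 1) t) := by rw [mprc]
      _ = (∏ j ∈ Finset.range (K + 1 + 1), (n - j)) * Nat.choose (n - 1 - (K + 1)) t := by
          simp only [Finset.prod_range_succ]
          have h3 : n - 1 - K - 1 = n - 1 - (K + 1) := by omega
          have h1 : n - 1 - K = n - (K + 1) := by omega
          rw [h3, h1]
          have h4 : n - (K + 1) = n - 1 - K := by omega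
          rw [h4]
          ring

lemma elem_e (k : ℕ) (hk : 1 ≤ k) : ((k : ℝ)/(k+1))^(k+1) ≤ 1/Real.exp 1 := by
  have hkp : (0:ℝ) < (k:ℝ) + 1 := by positivity
  have h1 : (k:ℝ)/(k+1) ≤ Real.exp (-(1/((k:ℝ)+1))) := by
    have h := Real.add_one_le_exp (-(1/((k:ℝ)+1)))
    have heq : -(1/((k:ℝ)+1)) + 1 = k/(k+1) := by field_simp; ring
    linarith
  have h0 : (0:ℝ) ≤ (k:ℝ)/(k+1) := by positivity
  calc ((k:ℝ)/(k+1))^(k+1) ≤ (Real.exp (-(1/((k:ℝ)+1))))^(k+1) := by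
        exact pow_le_pow_left₀ h0 h1 _
    _ = Real.exp ((k+1 : ℕ) * (-(1/((k:ℝ)+1)))) := by rw [Real.exp_nat_mul]
    _ = Real.exp (-1) := by
        congr 1
        push_cast
        field_simp
    _ = 1/Real.exp 1 := by rw [Real.exp_neg]; ring

lemma analytic (n k s : ℕ) (hk : 1 ≤ k) (hn : k * (k + 1) ≤ n)
    (hs1 : (k + 1) * s ≤ n) (hs2 : n ≤ (k + 1) * s + k) (hspos : 1 ≤ s) :
    (k : ℝ)^k / (k+1 : ℝ)^(k+1) * n - (k + 2 : ℝ) / Real.exp 1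
      ≤ ((n - k : ℕ) : ℝ) * ((n - (k+1)).choose (s-1) : ℝ) / ((n.choose s : ℕ) : ℝ) := by
  have hks : k ≤ k * s := Nat.le_mul_of_pos_right k hspos
  have hexp : (k + 1) * s = k * s + s := by ring
  have hsk : s + k ≤ n := by omega
  have hkn : k < n := by omega
  have hsn : s ≤ n := by omega
  -- real versions
  have hn0 : (0:ℝ) < n := by
    have : 0 < n := by omega
    exact_mod_cast this
  have hk1 : (1:ℝ) ≤ k := by exact_mod_cast hk
  have hkR : (k:ℝ) < n := by exact_mod_cast hkn
  have hskR : (s:ℝ) + k ≤ n := by exact_mod_cast hsk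
  have hs1R : ((k:ℝ) + 1) * s ≤ n := by exact_mod_cast hs1
  have hs2R : (n:ℝ) ≤ ((k:ℝ) + 1) * s + k := by exact_mod_cast hs2
  have hsposR : (1:ℝ) ≤ s := by exact_mod_cast hspos
  have hnkR : (k:ℝ) * (k+1) ≤ n := by exact_mod_cast hn
  -- cast the product identity
  have cast1 : ((∏ j ∈ Finset.range k, (n - s - j) : ℕ) : ℝ)
      = ∏ j ∈ Finset.range k, ((n:ℝ) - s - j) := by
    rw [Nat.cast_prod]
    refine Finset.prod_congr rfl fun j hj => ?_
    have hj' : j < k := Finset.mem_range.1 hj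
    have h1 : j ≤ n - s := by omega
    rw [Nat.cast_sub h1, Nat.cast_sub (by omega : s ≤ n)]
  have cast2 : ((∏ j ∈ Finset.range (k+1), (n - j) : ℕ) : ℝ)
      = ∏ j ∈ Finset.range (k+1), ((n:ℝ) - j) := by
    rw [Nat.cast_prod]
    refine Finset.prod_congr rfl fun j hj => ?_
    have hj' : j < k + 1 := Finset.mem_range.1 hj
    rw [Nat.cast_sub (by omega : j ≤ n)]
  have hnid := nid n (s - 1) k
  rw [(by omega : s - 1 + 1 = s), (by omega : n - 1 - k = n - (k + 1))] at hnid
  have eq1 : ((n.choose s : ℕ) : ℝ) * ((s:ℝ) * ∏ j ∈ Finset.range k, ((n:ℝ) - s - j))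
      = (∏ j ∈ Finset.range (k+1), ((n:ℝ) - j)) * (((n - (k+1)).choose (s-1) : ℕ) : ℝ) := by
    rw [← cast1, ← cast2]
    exact_mod_cast congrArg (Nat.cast : ℕ → ℝ) hnid
  rw [Finset.prod_range_succ] at eq1
  have hP2pos : (0:ℝ) < ∏ j ∈ Finset.range k, ((n:ℝ) - j) := by
    apply Finset.prod_pos
    intro j hj
    have : j < k := Finset.mem_range.1 hj
    have : (j:ℝ) < n := by
      have : j < n := by omega
      exact_mod_cast this
    linarith
  have hApos : (0:ℝ) < ((n.choose s : ℕ) : ℝ) := by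
    have := Nat.choose_pos hsn
    exact_mod_cast this
  -- the expectation in ratio form
  have eqE : ((n - k : ℕ) : ℝ) * ((n - (k+1)).choose (s-1) : ℝ) / ((n.choose s : ℕ) : ℝ)
      = (s:ℝ) * ∏ j ∈ Finset.range k, (((n:ℝ) - s - j) / ((n:ℝ) - j)) := by
    rw [Finset.prod_div_distrib, Nat.cast_sub (le_of_lt hkn)]
    field_simp
    linear_combination (-1 : ℝ) * eq1
  rw [eqE]
  have hnsk0 : (0:ℝ) ≤ (n:ℝ) - s - k := by linarith
  have hbase0 : (0:ℝ) ≤ ((n:ℝ) - s - k)/n := div_nonneg hnsk0 hn0.le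
  have hfac : ∀ j ∈ Finset.range k, ((n:ℝ) - s - k)/n ≤ ((n:ℝ) - s - j)/((n:ℝ) - j) := by
    intro j hj
    have hj' : j < k := Finset.mem_range.1 hj
    have hjR : (j:ℝ) ≤ (k:ℝ) - 1 := by
      have : (j:ℝ) + 1 ≤ k := by exact_mod_cast hj'
      linarith
    have hj0 : (0:ℝ) ≤ j := Nat.cast_nonneg j
    have hnj : (0:ℝ) < (n:ℝ) - j := by linarith
    rw [div_le_div_iff₀ hn0 hnj]
    nlinarith [mul_nonneg (by linarith : (0:ℝ) ≤ (k:ℝ) - 1 - j) (by linarith : (0:ℝ) ≤ (s:ℝ) + k),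
      mul_nonneg (by linarith : (0:ℝ) ≤ (k:ℝ) - 1) (by linarith : (0:ℝ) ≤ (n:ℝ) - s - k)]
  have hprod : (((n:ℝ) - s - k)/n)^k ≤ ∏ j ∈ Finset.range k, (((n:ℝ) - s - j)/((n:ℝ) - j)) := by
    calc (((n:ℝ) - s - k)/n)^k = ∏ _j ∈ Finset.range k, (((n:ℝ) - s - k)/n) := by
          rw [Finset.prod_const, Finset.card_range]
      _ ≤ _ := Finset.prod_le_prod (fun j _ => hbase0) hfac
  have hkk : (0:ℝ) < (k:ℝ) + 1 := by linarith
  have hk1n : (k:ℝ) + 1 ≤ n := by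
    have h := mul_le_mul_of_nonneg_right hk1 hkk.le
    linarith
  have hbase2 : (k:ℝ)/((k:ℝ)+1) * (1 - ((k:ℝ)+1)/n) ≤ ((n:ℝ) - s - k)/n := by
    rw [show (k:ℝ)/((k:ℝ)+1) * (1 - ((k:ℝ)+1)/n) = ((k:ℝ)*((n:ℝ) - ((k:ℝ)+1)))/((((k:ℝ)+1))*n) by
      field_simp]
    rw [div_le_div_iff₀ (by positivity) hn0]
    nlinarith [mul_le_mul_of_nonneg_right hs1R hn0.le]
  have hbase2' : (0:ℝ) ≤ (k:ℝ)/((k:ℝ)+1) * (1 - ((k:ℝ)+1)/n) := by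
    apply mul_nonneg (by positivity)
    rw [sub_nonneg]
    exact div_le_one_of_le₀ hk1n hn0.le
  have hpow2 : ((k:ℝ)/((k:ℝ)+1) * (1 - ((k:ℝ)+1)/n))^k ≤ (((n:ℝ) - s - k)/n)^k :=
    pow_le_pow_left₀ hbase2' hbase2 k
  have hbern : 1 - (k:ℝ)*(((k:ℝ)+1)/n) ≤ (1 - ((k:ℝ)+1)/n)^k := by
    have hm : (-2:ℝ) ≤ -(((k:ℝ)+1)/n) := by
      have h1 : ((k:ℝ)+1)/n ≤ 1 := div_le_one_of_le₀ hk1n hn0.le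
      linarith
    have h := one_add_mul_le_pow hm k
    have e1 : (1:ℝ) + -(((k:ℝ)+1)/n) = 1 - ((k:ℝ)+1)/n := by ring
    have e2 : (1:ℝ) + (k:ℕ) * (-(((k:ℝ)+1)/n)) = 1 - (k:ℝ)*(((k:ℝ)+1)/n) := by push_cast; ring
    rw [e1, e2] at h
    exact h
  set C := ((k:ℝ)/((k:ℝ)+1))^k with hC
  have hC0 : (0:ℝ) ≤ C := by positivity
  have hCe : C * ((k:ℝ)/((k:ℝ)+1)) ≤ 1/Real.exp 1 := by
    have h := elem_e k hk
    rw [pow_succ] at h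
    exact h
  have hsplit : ((k:ℝ)/((k:ℝ)+1) * (1 - ((k:ℝ)+1)/n))^k = C * (1 - ((k:ℝ)+1)/n)^k :=
    mul_pow _ _ _
  have hq0 : (0:ℝ) ≤ 1 - (k:ℝ)*(((k:ℝ)+1)/n) := by
    rw [sub_nonneg]
    rw [show (k:ℝ)*(((k:ℝ)+1)/n) = ((k:ℝ)*((k:ℝ)+1))/n by ring]
    exact div_le_one_of_le₀ hnkR hn0.le
  -- base^k ≥ C * (1 - k(k+1)/n)
  have hbpow : C * (1 - (k:ℝ)*(((k:ℝ)+1)/n)) ≤ (((n:ℝ) - s - k)/n)^k := by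
    calc C * (1 - (k:ℝ)*(((k:ℝ)+1)/n)) ≤ C * (1 - ((k:ℝ)+1)/n)^k :=
          mul_le_mul_of_nonneg_left hbern hC0
      _ = ((k:ℝ)/((k:ℝ)+1) * (1 - ((k:ℝ)+1)/n))^k := hsplit.symm
      _ ≤ _ := hpow2
  have hslow : ((n:ℝ) - k)/((k:ℝ)+1) ≤ s := by
    rw [div_le_iff₀ hkk]
    linarith
  have hEmid : ((n:ℝ) - k)/((k:ℝ)+1) * (C * (1 - (k:ℝ)*(((k:ℝ)+1)/n)))
      ≤ (s:ℝ) * ∏ j ∈ Finset.range k, (((n:ℝ) - s - j)/((n:ℝ) - j)) := by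
    have h1 : ((n:ℝ) - k)/((k:ℝ)+1) * (C * (1 - (k:ℝ)*(((k:ℝ)+1)/n)))
        ≤ (s:ℝ) * (C * (1 - (k:ℝ)*(((k:ℝ)+1)/n))) :=
      mul_le_mul_of_nonneg_right hslow (mul_nonneg hC0 hq0)
    have h2 : (s:ℝ) * (C * (1 - (k:ℝ)*(((k:ℝ)+1)/n))) ≤ (s:ℝ) * (((n:ℝ) - s - k)/n)^k :=
      mul_le_mul_of_nonneg_left hbpow (by linarith)
    have h3 : (s:ℝ) * (((n:ℝ) - s - k)/n)^k
        ≤ (s:ℝ) * ∏ j ∈ Finset.range k, (((n:ℝ) - s - j)/((n:ℝ) - j)) :=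
      mul_le_mul_of_nonneg_left hprod (by linarith)
    linarith
  refine le_trans ?_ hEmid
  -- final algebraic comparison
  have htar : (k:ℝ)^k / ((k:ℝ)+1)^(k+1) * n = C * ((n:ℝ)/((k:ℝ)+1)) := by
    rw [hC, div_pow, pow_succ]
    field_simp
  have hq : (n:ℝ)/((k:ℝ)+1) - (k:ℝ)/((k:ℝ)+1) - k
      ≤ ((n:ℝ) - k)/((k:ℝ)+1) * (1 - (k:ℝ)*(((k:ℝ)+1)/n)) := by
    have h1 : ((n:ℝ) - k)/((k:ℝ)+1) * (1 - (k:ℝ)*(((k:ℝ)+1)/n))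
        = ((n:ℝ) - k) * ((n:ℝ) - k*((k:ℝ)+1)) / ((((k:ℝ)+1))*n) := by
      field_simp
    have h2 : (n:ℝ)/((k:ℝ)+1) - (k:ℝ)/((k:ℝ)+1) - k
        = ((n:ℝ) - k - k*((k:ℝ)+1)) * n / ((((k:ℝ)+1))*n) := by
      field_simp
    rw [h1, h2, div_le_div_iff₀ (by positivity) (by positivity)]
    nlinarith [mul_nonneg (mul_nonneg (sq_nonneg ((k:ℝ))) (sq_nonneg ((k:ℝ)+1))) hn0.le]
  have hce2 : C * ((k:ℝ)/((k:ℝ)+1)) * ((k:ℝ)+2) ≤ ((k:ℝ)+2) / Real.exp 1 := by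
    have hkp2 : (0:ℝ) ≤ (k:ℝ) + 2 := by linarith
    calc C * ((k:ℝ)/((k:ℝ)+1)) * ((k:ℝ)+2) ≤ (1/Real.exp 1) * ((k:ℝ)+2) :=
          mul_le_mul_of_nonneg_right hCe hkp2
      _ = ((k:ℝ)+2) / Real.exp 1 := by ring
  have hCq : C * ((n:ℝ)/((k:ℝ)+1) - (k:ℝ)/((k:ℝ)+1) - k)
      ≤ ((n:ℝ) - k)/((k:ℝ)+1) * (C * (1 - (k:ℝ)*(((k:ℝ)+1)/n))) := by
    calc C * ((n:ℝ)/((k:ℝ)+1) - (k:ℝ)/((k:ℝ)+1) - k)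
        ≤ C * (((n:ℝ) - k)/((k:ℝ)+1) * (1 - (k:ℝ)*(((k:ℝ)+1)/n))) :=
          mul_le_mul_of_nonneg_left hq hC0
      _ = ((n:ℝ) - k)/((k:ℝ)+1) * (C * (1 - (k:ℝ)*(((k:ℝ)+1)/n))) := by ring
  have hid : C * ((n:ℝ)/((k:ℝ)+1) - (k:ℝ)/((k:ℝ)+1) - k)
      = C * ((n:ℝ)/((k:ℝ)+1)) - C * ((k:ℝ)/((k:ℝ)+1)) * ((k:ℝ)+2) := by
    have : (k:ℝ)/((k:ℝ)+1) + k = (k:ℝ)/((k:ℝ)+1) * ((k:ℝ)+2) := by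
      field_simp
      ring
    nlinarith [this]
  rw [htar]
  calc C * ((n:ℝ)/((k:ℝ)+1)) - ((k:ℝ) + 2) / Real.exp 1
      ≤ C * ((n:ℝ)/((k:ℝ)+1)) - C * ((k:ℝ)/((k:ℝ)+1)) * ((k:ℝ)+2) := by
        linarith only [hce2]
    _ = C * ((n:ℝ)/((k:ℝ)+1) - (k:ℝ)/((k:ℝ)+1) - k) := hid.symm
    _ ≤ _ := hCq


end AuxKTree

/-- For a `k`-tree on `n ≥ k(k+1)` vertices and a uniformly random
    `⌊n/(k+1)⌋`-element subset `S` of its vertices, the expected number of connected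
    components of `G[S]` is at least `k^k/(k+1)^(k+1) · n − (k+2)/e`. -/
theorem kTree_expected_components_ge (n k : ℕ) (G : SimpleGraph (Fin n))
    (M : Fin n → Finset (Fin n)) (hG : IsKTree n k G M)
    (hk : 0 < k) (hn : k * (k + 1) ≤ n) :
    (k : ℝ)^k / (k+1 : ℝ)^(k+1) * n - (k + 2 : ℝ) / Real.exp 1
      ≤ (∑ S ∈ (Finset.univ : Finset (Fin n)).powersetCard (n / (k + 1)),
          (Nat.card ((G.induce (S : Set (Fin n))).ConnectedComponent) : ℝ)) /
          (((Finset.univ : Finset (Fin n)).powersetCard (n / (k + 1))).card : ℝ) := by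
  classical
  obtain ⟨h1, h2, h3, h4, h5⟩ := hG
  set s := n / (k + 1) with hs
  have hk1 : 0 < k + 1 := by omega
  have hs1 : (k + 1) * s ≤ n := by
    rw [mul_comm]; exact Nat.div_mul_le_self n (k + 1)
  have hs2 : n ≤ (k + 1) * s + k := by
    have hdm := Nat.div_add_mod n (k + 1)
    rw [← hs] at hdm
    have hmlt := Nat.mod_lt n hk1
    omega
  have hkn1 : k + 1 ≤ n := by
    have : k + 1 ≤ k * (k + 1) := Nat.le_mul_of_pos_left _ hk
    omega
  have hspos : 1 ≤ s := by
    rw [hs]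
    exact (Nat.one_le_div_iff hk1).2 hkn1
  have hkn : k < n := by omega
  -- combinatorial lower bound, in ℕ
  have L1 := sum_lower (M := M) h1 h2 s hspos hkn
  have L2 : ∑ S ∈ (Finset.univ : Finset (Fin n)).powersetCard s,
        (S.filter (fun v => M v ∩ S = ∅)).card
      ≤ ∑ S ∈ (Finset.univ : Finset (Fin n)).powersetCard s,
        Nat.card ((G.induce (S : Set (Fin n))).ConnectedComponent) :=
    Finset.sum_le_sum fun S _ => comp_bound h1 h4 h5 S
  have LN : (n - k) * (n - (k + 1)).choose (s - 1)
      ≤ ∑ S ∈ (Finset.univ : Finset (Fin n)).powersetCard s,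
        Nat.card ((G.induce (S : Set (Fin n))).ConnectedComponent) := L1.trans L2
  have hcardp : (((Finset.univ : Finset (Fin n)).powersetCard s).card : ℝ)
      = ((n.choose s : ℕ) : ℝ) := by
    rw [Finset.card_powersetCard, Finset.card_univ, Fintype.card_fin]
  rw [hcardp]
  have hsn : s ≤ n := by
    have := Nat.le_mul_of_pos_left s hk1
    omega
  have hA0 : (0:ℝ) < ((n.choose s : ℕ) : ℝ) := by
    have := Nat.choose_pos hsn
    exact_mod_cast this
  refine le_trans (analytic n k s hk hn hs1 hs2 hspos) ?_
  have hnum : ((n - k : ℕ) : ℝ) * ((n - (k+1)).choose (s-1) : ℝ)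
      ≤ ∑ S ∈ (Finset.univ : Finset (Fin n)).powersetCard s,
        (Nat.card ((G.induce (S : Set (Fin n))).ConnectedComponent) : ℝ) := by
    rw [← Nat.cast_sum, ← Nat.cast_mul]
    exact_mod_cast LN
  exact (div_le_div_iff_of_pos_right hA0).2 hnum
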